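/- Let T > 0 and let λ : (0,T] → (0,∞) satisfy λ(t)² ≤ K·Λ(t), λ(t) ≤ L, and Λ(T) ≤ e^{−1}, where Λ(t) := ∫₀ᵗ λ(s) ds. Let m, μ ∈ ℝ, κ ≥ 0, ℓ ≥ 0, l ∈ ℕ, and N ≥ 1. Then there exists a constant C > 0 such that for all t ∈ (0,T] and all x, ξ ∈ ℝ^d with Λ(t)·⟨x⟩⟨ξ⟩ ≥ N·ln(⟨x⟩⟨ξ⟩): ⟨x⟩^m·⟨ξ⟩^μ·λ(t)^κ·((λ(t)/Λ(t))·ln(1/Λ(t)))^{ℓ+l} ≤ C·⟨x⟩^{max(0,m+ℓ)+l}·⟨ξ⟩^{max(0,μ+ℓ)+l}. -/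
import Mathlib


/-- `Λ(t) = ∫₀ᵗ λ(s) ds`. -/
noncomputable def Lam (lam : ℝ → ℝ) (t : ℝ) : ℝ := ∫ s in (0:ℝ)..t, lam s

/-- The weight `⟨y⟩ = (e + |y|²)^{1/2}`. -/
noncomputable def jw {d : ℕ} (y : EuclideanSpace ℝ (Fin d)) : ℝ :=
  Real.sqrt (Real.exp 1 + ‖y‖ ^ 2)

lemma sqrt_exp_le_jw {d : ℕ} (y : EuclideanSpace ℝ (Fin d)) :
    Real.sqrt (Real.exp 1) ≤ jw y := by
  apply Real.sqrt_le_sqrt; nlinarith [sq_nonneg ‖y‖]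

lemma one_le_jw {d : ℕ} (y : EuclideanSpace ℝ (Fin d)) : 1 ≤ jw y := by
  have h := sqrt_exp_le_jw y
  have h2 : (1:ℝ) ≤ Real.sqrt (Real.exp 1) := by
    have h3 : Real.sqrt 1 ≤ Real.sqrt (Real.exp 1) := by
      apply Real.sqrt_le_sqrt
      have := Real.add_one_le_exp 1; linarith
    simpa using h3
  linarith

/-- Proposition 2.6 (5) of the paper: on the hyperbolic zone, the defining bound of the
class `SG_H{m,μ,κ,ℓ}(N)` applied to `∂ₜˡ a` is dominated by the weight
`⟨x⟩^{max(0,m+ℓ)+l}·⟨ξ⟩^{max(0,μ+ℓ)+l}`. -/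
theorem sg_hierarchy_class_embedding
    (d : ℕ) (T : ℝ) (hT : 0 < T) (lam : ℝ → ℝ) (K L : ℝ) (hK : 0 < K) (hL : 0 < L)
    (hpos : ∀ t ∈ Set.Ioc 0 T, 0 < lam t)
    (hKb : ∀ t ∈ Set.Ioc 0 T, lam t ^ 2 ≤ K * Lam lam t)
    (hLb : ∀ t ∈ Set.Ioc 0 T, lam t ≤ L)
    (hΛT : Lam lam T ≤ Real.exp (-1))
    (m μ κ ℓ : ℝ) (hκ : 0 ≤ κ) (hℓ : 0 ≤ ℓ) (l : ℕ) (N : ℝ) (hN : 1 ≤ N) :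
    ∃ C : ℝ, 0 < C ∧ ∀ t ∈ Set.Ioc 0 T, ∀ x ξ : EuclideanSpace ℝ (Fin d),
      N * Real.log (jw x * jw ξ) ≤ Lam lam t * (jw x * jw ξ) →
      jw x ^ m * jw ξ ^ μ * lam t ^ κ *
          (lam t / Lam lam t * Real.log (1 / Lam lam t)) ^ (ℓ + (l : ℝ)) ≤
        C * jw x ^ (max 0 (m + ℓ) + (l : ℝ)) * jw ξ ^ (max 0 (μ + ℓ) + (l : ℝ)) := by
  -- integrability of lam on [0,t]
  have hint : ∀ t ∈ Set.Ioc 0 T, IntervalIntegrable lam MeasureTheory.volume 0 t := by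
    intro t ht
    by_contra h
    have h0 : Lam lam t = 0 := intervalIntegral.integral_undef h
    have h1 := hKb t ht
    have h2 := hpos t ht
    rw [h0] at h1
    nlinarith
  have hΛpos : ∀ t ∈ Set.Ioc 0 T, 0 < Lam lam t := by
    intro t ht
    have h1 := hKb t ht; have h2 := hpos t ht
    nlinarith
  have hΛle : ∀ t ∈ Set.Ioc 0 T, Lam lam t ≤ Real.exp (-1) := by
    intro t ht
    have hTm : t ≤ T := ht.2
    have hiT := hint T ⟨hT, le_refl T⟩
    have hit := hint t ht
    have hitT : IntervalIntegrable lam MeasureTheory.volume t T := by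
      apply hiT.mono_set
      rw [Set.uIcc_of_le hTm, Set.uIcc_of_le hT.le]
      exact Set.Icc_subset_Icc ht.1.le le_rfl
    have hadd : Lam lam t + ∫ s in t..T, lam s = Lam lam T :=
      intervalIntegral.integral_add_adjacent_intervals hit hitT
    have hnn : 0 ≤ ∫ s in t..T, lam s := by
      apply intervalIntegral.integral_nonneg hTm
      intro u hu
      exact (hpos u ⟨lt_of_lt_of_le ht.1 hu.1, hu.2⟩).le
    linarith
  set e : ℝ := ℓ + (l : ℝ) with he_def
  have he : 0 ≤ e := by positivity
  refine ⟨L ^ κ * (2 * Real.sqrt K) ^ e, by positivity, ?_⟩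
  intro t ht x ξ hz
  set A := jw x with hA_def
  set B := jw ξ with hB_def
  set w := A * B with hw_def
  set Λ := Lam lam t with hΛ_def
  have hA : 1 ≤ A := one_le_jw x
  have hB : 1 ≤ B := one_le_jw ξ
  have hApos : 0 < A := lt_of_lt_of_le one_pos hA
  have hBpos : 0 < B := lt_of_lt_of_le one_pos hB
  have hwpos : 0 < w := mul_pos hApos hBpos
  have hwe : Real.exp 1 ≤ w := by
    have h1 := sqrt_exp_le_jw x
    have h2 := sqrt_exp_le_jw ξ
    have h3 : Real.sqrt (Real.exp 1) * Real.sqrt (Real.exp 1) ≤ A * B :=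
      mul_le_mul h1 h2 (Real.sqrt_nonneg _) (le_trans (Real.sqrt_nonneg _) h1)
    rwa [Real.mul_self_sqrt (Real.exp_pos 1).le] at h3
  have hlogw : 1 ≤ Real.log w := (Real.le_log_iff_exp_le hwpos).2 hwe
  have hΛt : 0 < Λ := hΛpos t ht
  have hlamt : 0 < lam t := hpos t ht
  -- 1 ≤ Λ * w
  have hΛw : 1 ≤ Λ * w := by
    nlinarith [mul_le_mul hN hlogw one_pos.le (by linarith : (0:ℝ) ≤ N)]
  have hinv : 1 / Λ ≤ w := by
    rw [div_le_iff₀ hΛt]; nlinarith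
  -- log(1/Λ) ≥ 1 > 0
  have hΛ1 : Λ ≤ Real.exp (-1) := hΛle t ht
  have hlogΛ : 1 ≤ Real.log (1 / Λ) := by
    rw [one_div, Real.log_inv]
    have := Real.log_le_log hΛt hΛ1
    rw [Real.log_exp] at this
    linarith
  have hloginv_le : Real.log (1 / Λ) ≤ Real.log w :=
    Real.log_le_log (by positivity) hinv
  -- (λ/Λ)² ≤ K * w
  have hsq : (lam t / Λ) ^ 2 ≤ K * w := by
    rw [div_pow, div_le_iff₀ (by positivity)]
    nlinarith [hKb t ht]
  have h1 : lam t / Λ ≤ Real.sqrt (K * w) := by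
    apply Real.le_sqrt' (by positivity) |>.2 hsq
  have hlogw2 : Real.log w ≤ 2 * Real.sqrt w := by
    have hs : 0 < Real.sqrt w := Real.sqrt_pos.2 hwpos
    have h2 : Real.log (Real.sqrt w) ≤ Real.sqrt w - 1 := Real.log_le_sub_one_of_pos hs
    have h3 : Real.log (Real.sqrt w) = Real.log w / 2 := Real.log_sqrt hwpos.le
    linarith
  set X : ℝ := lam t / Λ * Real.log (1 / Λ) with hX_def
  have hXpos : 0 < X := mul_pos (by positivity) (by linarith)
  have hkey : X ≤ 2 * Real.sqrt K * w := by
    calc X ≤ Real.sqrt (K * w) * Real.log w := by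
          apply mul_le_mul h1 hloginv_le (by linarith) (Real.sqrt_nonneg _)
      _ ≤ Real.sqrt (K * w) * (2 * Real.sqrt w) := by
          apply mul_le_mul_of_nonneg_left hlogw2 (Real.sqrt_nonneg _)
      _ = 2 * Real.sqrt K * (Real.sqrt w * Real.sqrt w) := by
          rw [Real.sqrt_mul hK.le]; ring
      _ = 2 * Real.sqrt K * w := by rw [Real.mul_self_sqrt hwpos.le]
  have hXe : X ^ e ≤ (2 * Real.sqrt K) ^ e * (A ^ e * B ^ e) := by
    calc X ^ e ≤ (2 * Real.sqrt K * w) ^ e := Real.rpow_le_rpow hXpos.le hkey he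
      _ = (2 * Real.sqrt K) ^ e * (A ^ e * B ^ e) := by
          rw [Real.mul_rpow (by positivity) hwpos.le, Real.mul_rpow hApos.le hBpos.le]
  have hlamk : lam t ^ κ ≤ L ^ κ := Real.rpow_le_rpow hlamt.le (hLb t ht) hκ
  have hAe : A ^ m * A ^ e ≤ A ^ (max 0 (m + ℓ) + (l : ℝ)) := by
    rw [← Real.rpow_add hApos]
    apply Real.rpow_le_rpow_of_exponent_le hA
    have := le_max_right 0 (m + ℓ); rw [he_def]; linarith
  have hBe : B ^ μ * B ^ e ≤ B ^ (max 0 (μ + ℓ) + (l : ℝ)) := by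
    rw [← Real.rpow_add hBpos]
    apply Real.rpow_le_rpow_of_exponent_le hB
    have := le_max_right 0 (μ + ℓ); rw [he_def]; linarith
  calc A ^ m * B ^ μ * lam t ^ κ * X ^ e
      ≤ A ^ m * B ^ μ * L ^ κ * ((2 * Real.sqrt K) ^ e * (A ^ e * B ^ e)) := by
        apply mul_le_mul _ hXe (Real.rpow_nonneg hXpos.le e) (by positivity)
        exact mul_le_mul_of_nonneg_left hlamk (by positivity)
    _ = L ^ κ * (2 * Real.sqrt K) ^ e * ((A ^ m * A ^ e) * (B ^ μ * B ^ e)) := by ring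
    _ ≤ L ^ κ * (2 * Real.sqrt K) ^ e *
        (A ^ (max 0 (m + ℓ) + (l : ℝ)) * B ^ (max 0 (μ + ℓ) + (l : ℝ))) := by
        apply mul_le_mul_of_nonneg_left _ (by positivity)
        apply mul_le_mul hAe hBe (by positivity) (by positivity)
    _ = L ^ κ * (2 * Real.sqrt K) ^ e * A ^ (max 0 (m + ℓ) + (l : ℝ)) *
        B ^ (max 0 (μ + ℓ) + (l : ℝ)) := by ring
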